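/- For every complex number z = x + iy and every positive integer n, the derivative of the normalized Hermite function satisfies |ζ_n'(z)| ≤ (2e³/π²)^{1/4} · e^{|z|²/2 + x² + |y|} · (1 + √(2n)) · e^{2n|y|}. -/

import Mathlib

open Complex Real

noncomputable def hermiteH (n : ℕ) (z : ℂ) : ℂ :=
  (-1) ^ n * Complex.exp (z ^ 2) * iteratedDeriv n (fun w => Complex.exp (-w ^ 2)) z

noncomputable def zetaH (n : ℕ) (z : ℂ) : ℂ :=
  (((Real.pi ^ ((1 : ℝ) / 4) * 2 ^ ((n : ℝ) / 2) * Real.sqrt (n.factorial))⁻¹ : ℝ) : ℂ) *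
    (-1) ^ n * Complex.exp (-z ^ 2 / 2) * hermiteH n z

open Polynomial


noncomputable def P : ℕ → Polynomial ℝ
  | 0 => 1
  | n+1 => 2 * Polynomial.X * P n - Polynomial.derivative (P n)

lemma P_succ (n : ℕ) : P (n+1) = 2 * Polynomial.X * P n - Polynomial.derivative (P n) := rfl

lemma derivP : ∀ n : ℕ, Polynomial.derivative (P (n+1)) = Polynomial.C ((2:ℝ)*(n+1)) * P n := by
  intro n
  induction n with
  | zero =>
    simp [P]
    exact (map_ofNat _ 2).symm
  | succ n ih =>
    have h : Polynomial.derivative (P n) = 2 * Polynomial.X * P n - P (n+1) := by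
      rw [P_succ n]; ring
    rw [P_succ (n+1), derivative_sub, derivative_mul, derivative_mul, ih, derivative_C_mul, h]
    simp only [derivative_ofNat, derivative_X]
    rw [show ((2:ℝ)*(↑(n+1)+1)) = (2*(↑n+1)) + 2 by push_cast; ring, Polynomial.C_add,
      show Polynomial.C (2:ℝ) = 2 from map_ofNat _ 2]
    push_cast
    ring

lemma rec3 (n : ℕ) : P (n+2) = 2 * Polynomial.X * P (n+1) - Polynomial.C ((2:ℝ)*(n+1)) * P n := by
  rw [P_succ (n+1), derivP]

lemma P_natDegree_le (n : ℕ) : (P n).natDegree ≤ n := by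
  induction n with
  | zero => simp [P]
  | succ n ih =>
    rw [P_succ n]
    refine le_trans (natDegree_sub_le _ _) (max_le ?_ ?_)
    · refine le_trans (natDegree_mul_le) ?_
      have : (2 * Polynomial.X : Polynomial ℝ).natDegree ≤ 1 := by
        refine le_trans (natDegree_mul_le) ?_
        simp
      omega
    · have := natDegree_derivative_le (P n)
      omega

lemma iterDerivP (m : ℕ) : ∀ j : ℕ, Polynomial.derivative^[j] (P m) =
    Polynomial.C ((2^j * m.descFactorial j : ℕ) : ℝ) * P (m - j) := by
  intro j
  induction j with
  | zero => simp
  | succ j ih =>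
    rw [Function.iterate_succ_apply', ih, derivative_C_mul]
    rcases Nat.lt_or_ge j m with h | h
    · obtain ⟨s, hs⟩ : ∃ s, m - j = s + 1 := ⟨m - j - 1, by omega⟩
      rw [hs, derivP]
      have h2 : m - (j+1) = s := by omega
      rw [h2, ← mul_assoc, ← Polynomial.C_mul]
      congr 1
      have hd : m.descFactorial (j+1) = (m - j) * m.descFactorial j := Nat.descFactorial_succ m j
      rw [hd, hs]
      push_cast
      ring
    · have h1 : m - j = 0 := by omega
      have h2 : m - (j+1) = 0 := by omega
      have h3 : m.descFactorial (j+1) = 0 := Nat.descFactorial_eq_zero_iff_lt.mpr (by omega)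
      rw [h1, h2, h3]
      have h4 : Polynomial.derivative (P 0) = 0 := by simp [P]
      rw [h4]
      simp

lemma P_eval_neg : ∀ n : ℕ, ∀ x : ℝ, (P n).eval (-x) = (-1)^n * (P n).eval x
  | 0, x => by simp [P]
  | 1, x => by
      have : P 1 = 2 * Polynomial.X * P 0 - Polynomial.derivative (P 0) := rfl
      simp [this, P]
  | (n+2), x => by
      rw [rec3]
      simp only [eval_sub, eval_mul, eval_ofNat, eval_X, eval_C]
      rw [P_eval_neg (n+1) x, P_eval_neg n x]
      ring

lemma eval0_rec (n : ℕ) : (P (n+2)).eval 0 = -(2*((n:ℝ)+1)) * (P n).eval 0 := by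
  rw [rec3]
  simp

lemma E0prod : ∀ k : ℕ, (P k).eval 0 * (P (k+1)).eval 0 = 0 := by
  intro k
  induction k with
  | zero =>
    have : P 1 = 2 * Polynomial.X * P 0 - Polynomial.derivative (P 0) := rfl
    simp [this, P]
  | succ k ih =>
    rw [eval0_rec k]
    nlinarith [ih]

lemma E0sq : ∀ k : ℕ, ((P k).eval 0)^2 ≤ (2^k * k.factorial : ℕ)
  | 0 => by simp [P]
  | 1 => by
      have : P 1 = 2 * Polynomial.X * P 0 - Polynomial.derivative (P 0) := rfl
      simp [this, P]
  | (k+2) => by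
      have h := E0sq k
      rw [eval0_rec k]
      have hle : (4*((k:ℝ)+1)^2) * (2^k * k.factorial : ℕ) ≤ ((2^(k+2) * (k+2).factorial : ℕ) : ℝ) := by
        have : ((2^(k+2) * (k+2).factorial : ℕ) : ℝ) = 4 * ((k:ℝ)+2) * ((k:ℝ)+1) * (2^k * k.factorial : ℕ) := by
          push_cast [Nat.factorial_succ]
          ring
        rw [this]
        have h1 : (0:ℝ) ≤ ((2^k * k.factorial : ℕ) : ℝ) := by positivity
        nlinarith [h1]
      calc (-(2*((k:ℝ)+1)) * (P k).eval 0)^2 = (4*((k:ℝ)+1)^2) * ((P k).eval 0)^2 := by ring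
      _ ≤ (4*((k:ℝ)+1)^2) * (2^k * k.factorial : ℕ) := by nlinarith [E0sq k, sq_nonneg ((k:ℝ)+1)]
      _ ≤ _ := hle

lemma F0_le (k : ℕ) : (2*(k:ℝ)+1) * ((P k).eval 0)^2 + ((Polynomial.derivative (P k)).eval 0)^2
    ≤ (2*(k:ℝ)+1) * (2^k * k.factorial : ℕ) := by
  cases k with
  | zero => simp [P]
  | succ j =>
    rw [derivP j]
    simp only [eval_mul, eval_C]
    rcases mul_eq_zero.mp (E0prod j) with h | h
    · -- eval0 (P j) = 0
      rw [h]
      have := E0sq (j+1)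
      have h1 : (0:ℝ) ≤ 2*((j:ℝ)+1)+1 := by positivity
      push_cast at this ⊢
      nlinarith [this]
    · -- eval0 (P (j+1)) = 0
      rw [h]
      have hj := E0sq j
      push_cast at hj
      have h0 : (0:ℝ) ≤ (2:ℝ)^j * (j.factorial:ℝ) := by positivity
      have key : ((2*((j:ℝ)+1)) * (P j).eval 0)^2 ≤ 4*((j:ℝ)+1)^2 * ((2:ℝ)^j * (j.factorial:ℝ)) := by
        nlinarith [mul_le_mul_of_nonneg_left hj (by positivity : (0:ℝ) ≤ 4*((j:ℝ)+1)^2)]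
      push_cast [Nat.factorial_succ]
      rw [show ((2:ℝ)^(j+1)) = 2^j*2 from pow_succ 2 j]
      have h3 : (2*((j:ℝ)+1)+1) * ((2:ℝ)^j*2*(((j:ℝ)+1)*(j.factorial:ℝ)))
          = 4*((j:ℝ)+1)^2*((2:ℝ)^j*(j.factorial:ℝ)) + 2*((j:ℝ)+1)*((2:ℝ)^j*(j.factorial:ℝ)) := by
        ring
      nlinarith [key, h3, mul_nonneg (by positivity : (0:ℝ) ≤ 2*((j:ℝ)+1)) h0]


lemma odeP (k : ℕ) : Polynomial.derivative (Polynomial.derivative (P k))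
    - 2 * Polynomial.X * Polynomial.derivative (P k) + Polynomial.C (2*(k:ℝ)) * P k = 0 := by
  cases k with
  | zero => simp [P]
  | succ j =>
    have h : Polynomial.derivative (P j) = 2 * Polynomial.X * P j - P (j+1) := by
      rw [P_succ j]; ring
    rw [derivP j, derivative_C_mul, h]
    push_cast
    ring

noncomputable def gk (k : ℕ) (x : ℝ) : ℝ := Real.exp (-(x^2)/2) * (P k).eval x

noncomputable def g1k (k : ℕ) (x : ℝ) : ℝ :=
  Real.exp (-(x^2)/2) * ((Polynomial.derivative (P k)).eval x - x * (P k).eval x)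

noncomputable def Fk (k : ℕ) (x : ℝ) : ℝ := (2*(k:ℝ)+1 - x^2) * (gk k x)^2 + (g1k k x)^2

lemma hasDeriv_gauss (x : ℝ) :
    HasDerivAt (fun x : ℝ => Real.exp (-(x^2)/2)) (-x * Real.exp (-(x^2)/2)) x := by
  have h1 : HasDerivAt (fun x : ℝ => -(x^2)/2) (-x) x := by
    have := ((hasDerivAt_pow 2 x).neg.div_const 2)
    simpa using this.congr_deriv (by ring)
  simpa [mul_comm] using h1.exp

lemma hasDeriv_g (k : ℕ) (x : ℝ) : HasDerivAt (gk k) (g1k k x) x := by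
  have hp := (P k).hasDerivAt x
  have h := (hasDeriv_gauss x).mul hp
  refine h.congr_deriv ?_
  unfold g1k
  ring

lemma eval_ode (k : ℕ) (x : ℝ) :
    (Polynomial.derivative (Polynomial.derivative (P k))).eval x
      = 2*x*(Polynomial.derivative (P k)).eval x - 2*(k:ℝ)*(P k).eval x := by
  have h := congrArg (Polynomial.eval x) (odeP k)
  simp only [eval_add, eval_sub, eval_mul, eval_ofNat, eval_X, eval_C, eval_zero] at h
  linarith

lemma hasDeriv_g1 (k : ℕ) (x : ℝ) :
    HasDerivAt (g1k k) ((x^2 - (2*(k:ℝ)+1)) * gk k x) x := by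
  have hp1 := (Polynomial.derivative (P k)).hasDerivAt x
  have hp0 := (P k).hasDerivAt x
  have hid : HasDerivAt (fun x : ℝ => (Polynomial.derivative (P k)).eval x - x * (P k).eval x)
      ((Polynomial.derivative (Polynomial.derivative (P k))).eval x
        - (1 * (P k).eval x + x * (Polynomial.derivative (P k)).eval x)) x :=
    hp1.sub ((hasDerivAt_id x).mul hp0)
  have h := (hasDeriv_gauss x).mul hid
  refine h.congr_deriv ?_
  unfold gk
  rw [eval_ode]
  ring

lemma hasDeriv_F (k : ℕ) (x : ℝ) : HasDerivAt (Fk k) (-2*x*(gk k x)^2) x := by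
  have hc : HasDerivAt (fun x : ℝ => 2*(k:ℝ)+1 - x^2) (-(2*x)) x := by
    have := ((hasDerivAt_pow 2 x).const_add (2*(k:ℝ)+1)) |>.neg
    have h2 : HasDerivAt (fun x : ℝ => 2*(k:ℝ)+1 - x^2) (-(2*x^1)) x := by
      simpa [sub_eq_add_neg] using ((hasDerivAt_pow 2 x).neg.const_add (2*(k:ℝ)+1))
    simpa using h2
  have hg := hasDeriv_g k x
  have hg1 := hasDeriv_g1 k x
  have hgsq : HasDerivAt (fun x => (gk k x)^2) (2 * gk k x * g1k k x) x := by
    have h' := hg.pow 2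
    simp at h'
    exact h'
  have hg1sq : HasDerivAt (fun x => (g1k k x)^2)
      (2 * g1k k x * ((x^2 - (2*(k:ℝ)+1)) * gk k x)) x := by
    have h' := hg1.pow 2
    simp at h'
    exact h'
  have h := (hc.mul hgsq).add hg1sq
  refine h.congr_deriv ?_
  ring

lemma F_antitoneOn (k : ℕ) : AntitoneOn (Fk k) (Set.Ici (0:ℝ)) := by
  refine antitoneOn_of_deriv_nonpos (convex_Ici 0) ?_ ?_ ?_
  · exact (Continuous.continuousOn (by
      exact continuous_iff_continuousAt.mpr fun x => (hasDeriv_F k x).continuousAt))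
  · exact fun x _ => ((hasDeriv_F k x).differentiableAt).differentiableWithinAt
  · intro x hx
    rw [(hasDeriv_F k x).deriv]
    rw [interior_Ici] at hx
    have : (0:ℝ) ≤ x := le_of_lt hx
    nlinarith [sq_nonneg (gk k x)]

noncomputable def Nk (k : ℕ) : ℝ := ((2^k * k.factorial : ℕ) : ℝ)

lemma Nk_pos (k : ℕ) : 0 < Nk k := by
  unfold Nk
  positivity

lemma Fk_zero_le (k : ℕ) : Fk k 0 ≤ (2*(k:ℝ)+1) * Nk k := by
  have h := F0_le k
  unfold Fk gk g1k Nk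
  push_cast at h ⊢
  norm_num [Real.exp_zero]
  nlinarith [h]

lemma F_le (k : ℕ) {x : ℝ} (hx : 0 ≤ x) : Fk k x ≤ (2*(k:ℝ)+1) * Nk k :=
  le_trans (F_antitoneOn k (Set.self_mem_Ici) hx hx) (Fk_zero_le k)

lemma g1_sq_le (k : ℕ) {x : ℝ} (hx : 0 ≤ x) (hx2 : x^2 ≤ 2*(k:ℝ)+1) :
    (g1k k x)^2 ≤ (2*(k:ℝ)+1) * Nk k := by
  have h := F_le k hx
  unfold Fk at h
  nlinarith [sq_nonneg (gk k x)]

lemma g_sq_inner (k : ℕ) {x : ℝ} (hx : 0 ≤ x) (hx2 : x^2 ≤ 2/3*(2*(k:ℝ)+1)) :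
    (gk k x)^2 ≤ 3 * Nk k := by
  have h := F_le k hx
  unfold Fk at h
  have ht : (1:ℝ) ≤ 2*(k:ℝ)+1 := by
    have : (0:ℝ) ≤ (k:ℝ) := Nat.cast_nonneg k
    linarith
  nlinarith [sq_nonneg (g1k k x), sq_nonneg (gk k x), Nk_pos k]

lemma quad_le_exp {s : ℝ} (hs : 0 ≤ s) : 1 + s + s^2/2 ≤ Real.exp s := by
  have h := Real.sum_le_exp_of_nonneg hs 3
  simp [Finset.sum_range_succ] at h
  convert h using 1

lemma phi_tendsto (k : ℕ) :
    Filter.Tendsto (fun x => (gk k x)^2) Filter.atTop (nhds 0) := by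
  have hb : ∀ x : ℝ, 1 ≤ x → (gk k x)^2 ≤ (P k * P k).eval x / Real.exp x := by
    intro x hx
    unfold gk
    rw [Polynomial.eval_mul, mul_pow, ← Real.exp_nat_mul]
    have h1 : Real.exp ((2:ℕ) * (-(x^2)/2)) ≤ Real.exp (-x) := by
      apply Real.exp_le_exp.mpr
      push_cast
      nlinarith
    have h2 : ((P k).eval x)^2 * Real.exp (-x) = ((P k).eval x * (P k).eval x) / Real.exp x := by
      rw [Real.exp_neg]
      ring
    calc Real.exp ((2:ℕ) * (-(x^2)/2)) * ((P k).eval x)^2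
        ≤ Real.exp (-x) * ((P k).eval x)^2 := by nlinarith [sq_nonneg ((P k).eval x), h1]
      _ = (P k).eval x * (P k).eval x / Real.exp x := by rw [← h2]; ring
  refine tendsto_of_tendsto_of_tendsto_of_le_of_le' tendsto_const_nhds
    ((P k * P k).tendsto_div_exp_atTop) ?_ ?_
  · exact Filter.Eventually.of_forall (fun x => sq_nonneg _)
  · exact Filter.eventually_atTop.mpr ⟨1, hb⟩

lemma g_sq_mid (k : ℕ) {x : ℝ} (hx0 : Real.sqrt (2/3*(2*(k:ℝ)+1)) ≤ x)
    (hxT : x ≤ Real.sqrt (2*(k:ℝ)+1)) :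
    (gk k x)^2 ≤ (6 + 2*(2*(k:ℝ)+1)^2) * Nk k := by
  set t : ℝ := 2*(k:ℝ)+1 with hts
  have ht0 : (0:ℝ) ≤ t := by positivity
  set N : ℝ := Nk k with hNs
  have hN0 : 0 < N := Nk_pos k
  set x0 : ℝ := Real.sqrt (2/3*t) with hx0s
  set T : ℝ := Real.sqrt t with hTs
  set C : ℝ := Real.sqrt (t*N) with hCs
  have hTsq : T^2 = t := Real.sq_sqrt ht0
  have hx0sq : x0^2 = 2/3*t := Real.sq_sqrt (by positivity)
  have hCsq : C^2 = t*N := Real.sq_sqrt (by positivity)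
  have hx0T : x0 ≤ T := Real.sqrt_le_sqrt (by linarith)
  have hx0n : 0 ≤ x0 := Real.sqrt_nonneg _
  have hxn : 0 ≤ x := le_trans hx0n hx0
  have hbound : ∀ y ∈ Set.Icc (0:ℝ) T, ‖g1k k y‖ ≤ C := by
    intro y hy
    rw [Real.norm_eq_abs]
    apply Real.abs_le_sqrt
    apply g1_sq_le k hy.1
    calc y^2 ≤ T^2 := by nlinarith [hy.1, hy.2]
      _ = t := hTsq
  have key := (convex_Icc (0:ℝ) T).norm_image_sub_le_of_norm_hasDerivWithin_le
    (f' := g1k k) (fun y _ => (hasDeriv_g k y).hasDerivWithinAt) hbound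
    (Set.mem_Icc.mpr ⟨hx0n, hx0T⟩) (Set.mem_Icc.mpr ⟨hxn, hxT⟩)
  rw [Real.norm_eq_abs, Real.norm_eq_abs, _root_.abs_of_nonneg (by linarith : (0:ℝ) ≤ x - x0)] at key
  have hCn : 0 ≤ C := Real.sqrt_nonneg _
  have habs : |gk k x| ≤ |gk k x0| + C*(x-x0) := by
    have := abs_sub_abs_le_abs_sub (gk k x) (gk k x0)
    linarith
  have hgx0 : |gk k x0|^2 ≤ 3*N := by
    rw [_root_.sq_abs]
    exact g_sq_inner k hx0n (le_of_eq hx0sq)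
  have hdxT : x - x0 ≤ T := by linarith
  have h1 : (gk k x)^2 ≤ (|gk k x0| + C*(x-x0))^2 := by
    rw [← _root_.sq_abs]
    apply pow_le_pow_left₀ (abs_nonneg _) habs
  have h2 : (C*(x-x0))^2 ≤ t*N*t := by
    calc (C*(x-x0))^2 = C^2*(x-x0)^2 := by ring
      _ ≤ (t*N)*t := by
          rw [hCsq]
          have h3 : (x-x0)^2 ≤ t := by nlinarith
          nlinarith [mul_nonneg ht0 (le_of_lt hN0)]
  nlinarith [abs_nonneg (gk k x0), mul_nonneg hCn (by linarith : (0:ℝ) ≤ x - x0),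
    sq_nonneg (|gk k x0| - C*(x-x0)), mul_nonneg ht0 (le_of_lt hN0)]

lemma phi_hasDeriv (k : ℕ) (y : ℝ) :
    HasDerivAt (fun y => (gk k y)^2) (2 * gk k y * g1k k y) y := by
  have h := (hasDeriv_g k y).pow 2
  simp [mul_comm, mul_assoc] at h ⊢
  exact h

lemma psi_hasDeriv (k : ℕ) (y : ℝ) :
    HasDerivAt (fun y => 2 * gk k y * g1k k y)
      (2*(g1k k y)^2 + 2*(y^2 - (2*(k:ℝ)+1))*(gk k y)^2) y := by
  have h := ((hasDeriv_g k y).const_mul 2).mul (hasDeriv_g1 k y)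
  refine h.congr_deriv ?_
  ring

lemma psi_mono (k : ℕ) :
    MonotoneOn (fun y => 2 * gk k y * g1k k y) (Set.Ici (Real.sqrt (2*(k:ℝ)+1))) := by
  refine monotoneOn_of_deriv_nonneg (convex_Ici _) ?_ ?_ ?_
  · exact Continuous.continuousOn (continuous_iff_continuousAt.mpr
      fun y => (psi_hasDeriv k y).continuousAt)
  · exact fun y _ => ((psi_hasDeriv k y).differentiableAt).differentiableWithinAt
  · intro y hy
    rw [(psi_hasDeriv k y).deriv]
    rw [interior_Ici] at hy
    have hT : Real.sqrt (2*(k:ℝ)+1) < y := hy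
    have ht0 : (0:ℝ) ≤ 2*(k:ℝ)+1 := by positivity
    have h1 : 2*(k:ℝ)+1 ≤ y^2 := by
      have := Real.sq_sqrt ht0
      nlinarith [Real.sqrt_nonneg (2*(k:ℝ)+1)]
    nlinarith [sq_nonneg (g1k k y), sq_nonneg (gk k y)]

lemma psi_nonpos (k : ℕ) {a : ℝ} (ha : Real.sqrt (2*(k:ℝ)+1) ≤ a) :
    2 * gk k a * g1k k a ≤ 0 := by
  by_contra hpos
  push_neg at hpos
  set c : ℝ := 2 * gk k a * g1k k a with hc
  have hlin : ∀ y : ℝ, HasDerivAt (fun y : ℝ => c*y) c y := by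
    intro y
    simpa using (hasDerivAt_id y).const_mul c
  have hχ : MonotoneOn (fun y => (gk k y)^2 - c*y) (Set.Ici a) := by
    refine monotoneOn_of_deriv_nonneg (convex_Ici _) ?_ ?_ ?_
    · exact Continuous.continuousOn (continuous_iff_continuousAt.mpr
        fun y => ((phi_hasDeriv k y).sub (hlin y)).continuousAt)
    · exact fun y _ => (((phi_hasDeriv k y).sub (hlin y)).differentiableAt).differentiableWithinAt
    · intro y hy
      rw [interior_Ici] at hy
      rw [HasDerivAt.deriv (f := fun y => (gk k y)^2 - c*y) ((phi_hasDeriv k y).sub (hlin y))]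
      have hya : a ≤ y := le_of_lt hy
      have h1 : c ≤ 2 * gk k y * g1k k y := by
        have := psi_mono k (Set.mem_Ici.mpr ha)
          (Set.mem_Ici.mpr (le_trans ha hya)) hya
        simpa using this
      linarith
  have hev := Filter.eventually_atTop.mp
    ((phi_tendsto k).eventually_lt_const (show (0:ℝ) < (gk k a)^2 + 1 by positivity))
  obtain ⟨y0, hy0⟩ := hev
  set y : ℝ := max y0 (a + ((gk k a)^2 + 1)/c) with hys
  have hya : a ≤ y := le_trans (by
    have : (0:ℝ) < ((gk k a)^2 + 1)/c := by positivity
    linarith) (le_max_right _ _)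
  have h1 := hχ (Set.self_mem_Ici) (Set.mem_Ici.mpr hya) hya
  simp only at h1
  have h2 : (gk k a)^2 + 1 ≤ c * (y - a) := by
    have hge : a + ((gk k a)^2 + 1)/c ≤ y := le_max_right _ _
    have : ((gk k a)^2 + 1)/c ≤ y - a := by linarith
    calc (gk k a)^2 + 1 = c * (((gk k a)^2 + 1)/c) := by field_simp
      _ ≤ c * (y - a) := by nlinarith
  have h3 : (gk k y)^2 < (gk k a)^2 + 1 := hy0 y (le_max_left _ _)
  nlinarith [h1, h2, h3]

lemma phi_anti (k : ℕ) :
    AntitoneOn (fun y => (gk k y)^2) (Set.Ici (Real.sqrt (2*(k:ℝ)+1))) := by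
  refine antitoneOn_of_deriv_nonpos (convex_Ici _) ?_ ?_ ?_
  · exact Continuous.continuousOn (continuous_iff_continuousAt.mpr
      fun y => (phi_hasDeriv k y).continuousAt)
  · exact fun y _ => ((phi_hasDeriv k y).differentiableAt).differentiableWithinAt
  · intro y hy
    rw [(phi_hasDeriv k y).deriv, interior_Ici] at *
    exact psi_nonpos k (le_of_lt hy)

lemma g_sq_even (k : ℕ) (y : ℝ) : (gk k (-y))^2 = (gk k y)^2 := by
  unfold gk
  rw [P_eval_neg k y, neg_sq]
  have h1 : ((-1:ℝ)^k)^2 = 1 := by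
    rw [← pow_mul, mul_comm, pow_mul]
    norm_num
  nlinarith [h1]

lemma g_sq_le (k : ℕ) (x : ℝ) : (gk k x)^2 ≤ 3 * Nk k * Real.exp (2*x^2) := by
  have key : ∀ y : ℝ, 0 ≤ y → (gk k y)^2 ≤ 3 * Nk k * Real.exp (2*y^2) := by
    intro y hy
    set t : ℝ := 2*(k:ℝ)+1 with hts
    have ht1 : (1:ℝ) ≤ t := by
      have : (0:ℝ) ≤ (k:ℝ) := Nat.cast_nonneg k
      simp only [hts]; linarith
    have hN0 : 0 < Nk k := Nk_pos k
    rcases le_or_gt (y^2) (2/3*t) with hcase | hcase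
    · have h1 := g_sq_inner k hy hcase
      have h2 : (1:ℝ) ≤ Real.exp (2*y^2) := Real.one_le_exp (by positivity)
      nlinarith
    · have hbig : (gk k y)^2 ≤ (6 + 2*t^2) * Nk k := by
        have hx0y : Real.sqrt (2/3*t) ≤ y := by
          have h1 : Real.sqrt (2/3*t) ≤ Real.sqrt (y^2) := Real.sqrt_le_sqrt (le_of_lt hcase)
          rwa [Real.sqrt_sq hy] at h1
        rcases le_or_gt y (Real.sqrt t) with hyT | hyT
        · exact g_sq_mid k hx0y hyT
        · have hTmem : Real.sqrt t ∈ Set.Ici (Real.sqrt t) := Set.self_mem_Ici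
          have hymem : y ∈ Set.Ici (Real.sqrt t) := Set.mem_Ici.mpr (le_of_lt hyT)
          have h1 := phi_anti k hTmem hymem (le_of_lt hyT)
          simp only at h1
          have h2 := g_sq_mid k (x := Real.sqrt t)
            (Real.sqrt_le_sqrt (by linarith)) (le_refl _)
          exact le_trans h1 h2
      have hexp : Real.exp (4/3*t) ≤ Real.exp (2*y^2) := Real.exp_le_exp.mpr (by linarith)
      have hquad : 1 + (4/3*t) + (4/3*t)^2/2 ≤ Real.exp (4/3*t) := quad_le_exp (by linarith)
      have hnum : 6 + 2*t^2 ≤ 3 * (1 + (4/3*t) + (4/3*t)^2/2) := by nlinarith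
      calc (gk k y)^2 ≤ (6 + 2*t^2) * Nk k := hbig
        _ ≤ 3 * (1 + (4/3*t) + (4/3*t)^2/2) * Nk k := by nlinarith
        _ ≤ 3 * Real.exp (4/3*t) * Nk k := by nlinarith
        _ ≤ 3 * Nk k * Real.exp (2*y^2) := by nlinarith [Real.exp_pos (4/3*t), Real.exp_pos (2*y^2)]
  rcases le_or_gt 0 x with hx | hx
  · exact key x hx
  · calc (gk k x)^2 = (gk k (-(-x)))^2 := by norm_num
      _ = (gk k (-x))^2 := g_sq_even k (-x)
      _ ≤ 3 * Nk k * Real.exp (2*(-x)^2) := key (-x) (by linarith)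
      _ = 3 * Nk k * Real.exp (2*x^2) := by rw [neg_sq]



-- real-line absolute bound
lemma P_abs_le (k : ℕ) (x : ℝ) :
    |(P k).eval x| ≤ Real.sqrt 3 * Real.sqrt (Nk k) * Real.exp (3/2*x^2) := by
  have h := g_sq_le k x
  unfold gk at h
  have hexp : (Real.exp (-(x^2)/2))^2 = Real.exp (-(x^2)) := by
    rw [← Real.exp_nat_mul]; congr 1; push_cast; ring
  have hsq : ((P k).eval x)^2 ≤ 3 * Nk k * Real.exp (2*x^2) * Real.exp (x^2) := by
    have h2 : (Real.exp (-(x^2)/2) * (P k).eval x)^2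
        = Real.exp (-(x^2)) * ((P k).eval x)^2 := by
      rw [mul_pow, hexp]
    rw [h2] at h
    have h3 : Real.exp (-(x^2)) * Real.exp (x^2) = 1 := by
      rw [← Real.exp_add]; simp
    nlinarith [Real.exp_pos (x^2), Real.exp_pos (-(x^2)), sq_nonneg ((P k).eval x)]
  have he1 : Real.exp (3/2*x^2)^2 = Real.exp (3*x^2) := by
    rw [← Real.exp_nat_mul]; congr 1; push_cast; ring
  have he2 : Real.exp (2*x^2) * Real.exp (x^2) = Real.exp (3*x^2) := by
    rw [← Real.exp_add]; congr 1; ring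
  have hrhs : 3 * Nk k * Real.exp (2*x^2) * Real.exp (x^2)
      = (Real.sqrt 3 * Real.sqrt (Nk k) * Real.exp (3/2*x^2))^2 := by
    rw [mul_pow, mul_pow, Real.sq_sqrt (by norm_num : (0:ℝ) ≤ 3),
      Real.sq_sqrt (le_of_lt (Nk_pos k)), he1, mul_assoc, he2]
  rw [hrhs] at hsq
  calc |(P k).eval x| = Real.sqrt (((P k).eval x)^2) := (Real.sqrt_sq_eq_abs _).symm
    _ ≤ Real.sqrt ((Real.sqrt 3 * Real.sqrt (Nk k) * Real.exp (3/2*x^2))^2) :=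
        Real.sqrt_le_sqrt hsq
    _ = Real.sqrt 3 * Real.sqrt (Nk k) * Real.exp (3/2*x^2) := by
        rw [Real.sqrt_sq (by positivity)]

-- iterated derivative of the gaussian
lemma iterated_gauss (n : ℕ) : iteratedDeriv n (fun w : ℂ => Complex.exp (-w^2))
    = fun z => (-1)^n * Polynomial.aeval z (P n) * Complex.exp (-z^2) := by
  induction n with
  | zero =>
    funext z
    simp [P]
  | succ n ih =>
    rw [iteratedDeriv_succ, ih]
    funext z
    have h1 : HasDerivAt (fun z : ℂ => Polynomial.aeval z (P n))
        (Polynomial.aeval z (Polynomial.derivative (P n))) z :=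
      Polynomial.hasDerivAt_aeval (q := P n) z
    have h2 : HasDerivAt (fun z : ℂ => Complex.exp (-z^2)) (-(2*z)*Complex.exp (-z^2)) z := by
      have hz : HasDerivAt (fun z : ℂ => -z^2) (-(2*z)) z := by
        have h' := (hasDerivAt_pow 2 z).neg
        simp at h'
        exact h'
      simpa [mul_comm] using hz.cexp
    have h3 := (h1.const_mul ((-1:ℂ)^n)).mul h2
    rw [HasDerivAt.deriv (f := fun z : ℂ => (-1)^n * Polynomial.aeval z (P n) * Complex.exp (-z^2)) h3]
    have h4 : (Polynomial.aeval z) (P (n+1))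
        = 2*z*(Polynomial.aeval z) (P n) - (Polynomial.aeval z) (Polynomial.derivative (P n)) := by
      rw [P_succ]
      simp only [map_sub, map_mul, Polynomial.aeval_X, map_ofNat]
    rw [pow_succ, h4]
    ring

lemma hermiteH_eq (n : ℕ) (z : ℂ) : hermiteH n z = Polynomial.aeval z (P n) := by
  unfold hermiteH
  rw [iterated_gauss]
  have h1 : Complex.exp (z^2) * Complex.exp (-z^2) = 1 := by
    rw [← Complex.exp_add]; simp
  have h2 : ((-1:ℂ)^n) * (-1:ℂ)^n = 1 := by
    rw [← mul_pow]; simp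
  calc (-1)^n * Complex.exp (z^2) * ((-1)^n * (Polynomial.aeval z) (P n) * Complex.exp (-z^2))
      = (((-1:ℂ)^n) * (-1:ℂ)^n) * (Complex.exp (z^2) * Complex.exp (-z^2))
        * (Polynomial.aeval z) (P n) := by ring
    _ = (Polynomial.aeval z) (P n) := by rw [h1, h2]; ring

noncomputable def cK (n : ℕ) : ℝ := (Real.pi ^ ((1 : ℝ) / 4) * 2 ^ ((n : ℝ) / 2) * Real.sqrt (n.factorial))⁻¹

lemma cK_pos (n : ℕ) : 0 < cK n := by
  unfold cK
  have h1 : (0:ℝ) < Real.pi ^ ((1:ℝ)/4) := Real.rpow_pos_of_pos Real.pi_pos _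
  have h2 : (0:ℝ) < (2:ℝ) ^ ((n:ℝ)/2) := Real.rpow_pos_of_pos (by norm_num) _
  have h3 : (0:ℝ) < Real.sqrt (n.factorial) := Real.sqrt_pos.mpr (by positivity)
  positivity

lemma zetaH_eq (n : ℕ) (z : ℂ) :
    zetaH n z = ((cK n : ℝ):ℂ) * (-1)^n * Complex.exp (-z^2/2) * Polynomial.aeval z (P n) := by
  unfold zetaH cK
  rw [hermiteH_eq]

lemma c_rec (m : ℕ) : cK (m+1) * (2*((m:ℝ)+1)) = Real.sqrt (2*((m:ℝ)+1)) * cK m := by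
  unfold cK
  have hm1 : (0:ℝ) ≤ (m:ℝ)+1 := by positivity
  have h2 : ((2:ℝ)) ^ ((((m+1):ℕ):ℝ)/2) = (2:ℝ)^((m:ℝ)/2) * Real.sqrt 2 := by
    rw [Real.sqrt_eq_rpow, ← Real.rpow_add two_pos]
    congr 1
    push_cast
    ring
  have h3 : Real.sqrt (((m+1).factorial : ℕ)) = Real.sqrt ((m:ℝ)+1) * Real.sqrt (m.factorial) := by
    rw [← Real.sqrt_mul hm1]
    congr 1
    push_cast [Nat.factorial_succ]
    ring
  have h4 : Real.sqrt (2*((m:ℝ)+1)) = Real.sqrt 2 * Real.sqrt ((m:ℝ)+1) :=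
    Real.sqrt_mul (by norm_num) _
  have h5 : Real.sqrt 2 * Real.sqrt 2 = 2 := Real.mul_self_sqrt (by norm_num)
  have h6 : Real.sqrt ((m:ℝ)+1) * Real.sqrt ((m:ℝ)+1) = (m:ℝ)+1 := Real.mul_self_sqrt hm1
  have ha : (0:ℝ) < Real.pi ^ ((1:ℝ)/4) := Real.rpow_pos_of_pos Real.pi_pos _
  have hb : (0:ℝ) < (2:ℝ) ^ ((m:ℝ)/2) := Real.rpow_pos_of_pos two_pos _
  have hs : (0:ℝ) < Real.sqrt (m.factorial) := Real.sqrt_pos.mpr (by positivity)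
  have hs2 : (0:ℝ) < Real.sqrt 2 := by positivity
  have hsm : (0:ℝ) < Real.sqrt ((m:ℝ)+1) := Real.sqrt_pos.mpr (by positivity)
  rw [h2, h3, h4, show 2*((m:ℝ)+1) = (Real.sqrt 2*Real.sqrt 2)*(Real.sqrt ((m:ℝ)+1)*Real.sqrt ((m:ℝ)+1)) by rw [h5,h6]]
  field_simp

lemma zetaH_hasDeriv (n : ℕ) (z : ℂ) :
    HasDerivAt (zetaH n)
      (((cK n : ℝ):ℂ) * (-1)^n * Complex.exp (-z^2/2) *
        (Polynomial.aeval z (Polynomial.derivative (P n)) - z * Polynomial.aeval z (P n))) z := by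
  have hfun : zetaH n = fun z => ((cK n : ℝ):ℂ) * (-1)^n * Complex.exp (-z^2/2)
      * Polynomial.aeval z (P n) := funext (zetaH_eq n)
  rw [hfun]
  have hz : HasDerivAt (fun z : ℂ => -z^2/2) (-z) z := by
    have h := ((hasDerivAt_pow 2 z).neg.div_const 2)
    simpa using h.congr_deriv (by ring)
  have hexp : HasDerivAt (fun z : ℂ => Complex.exp (-z^2/2)) (-z * Complex.exp (-z^2/2)) z := by
    simpa [mul_comm] using hz.cexp
  have hp := Polynomial.hasDerivAt_aeval (q := P n) z
  have h := (hexp.const_mul (((cK n:ℝ):ℂ) * (-1)^n)).mul hp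
  refine h.congr_deriv ?_
  ring

lemma zetaH_deriv_eq (m : ℕ) (z : ℂ) :
    deriv (zetaH (m+1)) z = -z * zetaH (m+1) z
      - ((Real.sqrt (2*((m:ℝ)+1)) : ℝ):ℂ) * zetaH m z := by
  rw [(zetaH_hasDeriv (m+1) z).deriv, derivP m]
  rw [zetaH_eq (m+1) z, zetaH_eq m z]
  simp only [map_mul, Polynomial.aeval_C]
  have hc : ((cK (m+1) * (2*((m:ℝ)+1)) : ℝ):ℂ) = ((Real.sqrt (2*((m:ℝ)+1)) * cK m : ℝ):ℂ) := by
    exact_mod_cast congrArg (fun t : ℝ => (t:ℂ)) (c_rec m)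
  push_cast at hc ⊢
  rw [pow_succ]
  linear_combination (-(-1:ℂ)^m * Complex.exp (-z^2/2) * Polynomial.aeval z (P m)) * hc

lemma hasseDerivP (m j : ℕ) : Polynomial.hasseDeriv j (P m)
    = Polynomial.C (((2^j * m.descFactorial j : ℕ) : ℝ) / (j.factorial : ℝ)) * P (m - j) := by
  have h := congrFun (Polynomial.factorial_smul_hasseDeriv (R := ℝ) j) (P m)
  simp only [LinearMap.smul_apply] at h
  rw [iterDerivP m j] at h
  have hne : ((j.factorial : ℝ)) ≠ 0 := by positivity
  have h2 : (j.factorial : ℕ) • Polynomial.hasseDeriv j (P m)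
      = Polynomial.C ((j.factorial : ℝ)) * Polynomial.hasseDeriv j (P m) := by
    rw [nsmul_eq_mul, Polynomial.C_eq_natCast]
  rw [h2] at h
  have hC : Polynomial.C ((j.factorial:ℝ)) ≠ 0 := by
    simp only [ne_eq, Polynomial.C_eq_zero]
    exact hne
  apply mul_left_cancel₀ hC
  rw [h, ← mul_assoc, ← Polynomial.C_mul]
  congr 2
  field_simp

lemma term_le (m j : ℕ) (hjm : j ≤ m) :
    ((2^j * m.descFactorial j : ℕ) : ℝ) * Real.sqrt (Nk (m-j))
      ≤ Real.sqrt (Nk m) * (Real.sqrt (2*(m:ℝ)))^j := by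
  have hL : (0:ℝ) ≤ ((2^j * m.descFactorial j : ℕ) : ℝ) * Real.sqrt (Nk (m-j)) := by positivity
  have hR : (0:ℝ) ≤ Real.sqrt (Nk m) * (Real.sqrt (2*(m:ℝ)))^j := by positivity
  have hsq : (((2^j * m.descFactorial j : ℕ) : ℝ) * Real.sqrt (Nk (m-j)))^2
      ≤ (Real.sqrt (Nk m) * (Real.sqrt (2*(m:ℝ)))^j)^2 := by
    have e1 : (((2^j * m.descFactorial j : ℕ) : ℝ) * Real.sqrt (Nk (m-j)))^2
        = (((2^j * m.descFactorial j : ℕ) : ℝ))^2 * Nk (m-j) := by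
      rw [mul_pow, Real.sq_sqrt (le_of_lt (Nk_pos _))]
    have e2 : (Real.sqrt (Nk m) * (Real.sqrt (2*(m:ℝ)))^j)^2
        = Nk m * (2*(m:ℝ))^j := by
      rw [mul_pow, Real.sq_sqrt (le_of_lt (Nk_pos _)), ← pow_mul, mul_comm j 2, pow_mul,
        Real.sq_sqrt (by positivity : (0:ℝ) ≤ 2*(m:ℝ))]
    rw [e1, e2]
    unfold Nk
    have hdf : (m.descFactorial j : ℝ) ≤ (m:ℝ)^j := by
      exact_mod_cast Nat.descFactorial_le_pow m j
    have hnat := Nat.factorial_mul_descFactorial hjm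
    have hfac : ((m - j).factorial : ℝ) * (m.descFactorial j : ℝ) = (m.factorial : ℝ) := by
      exact_mod_cast congrArg (fun t : ℕ => (t:ℝ)) hnat
    push_cast
    have epow : ((2:ℝ)^j)^2 * (2:ℝ)^(m-j) = 2^(m+j) := by
      rw [← pow_mul, ← pow_add]
      congr 1
      omega
    have epow2 : (2:ℝ)^m * (2*(m:ℝ))^j = 2^(m+j) * (m:ℝ)^j := by
      rw [mul_pow, ← mul_assoc, ← pow_add]
    calc ((2:ℝ)^j * (m.descFactorial j:ℝ))^2 * ((2:ℝ)^(m-j) * ((m-j).factorial:ℝ))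
        = (((2:ℝ)^j)^2 * (2:ℝ)^(m-j)) * ((m.descFactorial j:ℝ) * (((m-j).factorial:ℝ) * (m.descFactorial j:ℝ))) := by
          ring
      _ = 2^(m+j) * ((m.descFactorial j:ℝ) * (m.factorial:ℝ)) := by rw [epow, hfac]
      _ ≤ 2^(m+j) * ((m:ℝ)^j * (m.factorial:ℝ)) := by
          have h2p : (0:ℝ) < (2:ℝ)^(m+j) := by positivity
          have hfm : (0:ℝ) ≤ (m.factorial:ℝ) := by positivity
          have hh := mul_le_mul_of_nonneg_right hdf hfm
          nlinarith
      _ = (2:ℝ)^m * (m.factorial:ℝ) * (2*(m:ℝ))^j := by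
          linear_combination (-(m.factorial:ℝ)) * epow2
  exact (pow_le_pow_iff_left₀ hL hR (by norm_num : 2 ≠ 0)).mp hsq

lemma aeval_norm_le (m : ℕ) (z : ℂ) :
    ‖Polynomial.aeval z (P m)‖ ≤ Real.sqrt 3 * Real.sqrt (Nk m) * Real.exp (3/2*z.re^2)
      * Real.exp (Real.sqrt (2*(m:ℝ)) * |z.im|) := by
  set x := z.re with hxdef
  set y := z.im with hydef
  have hzz : ((y:ℂ)*Complex.I + (x:ℂ)) = z := by
    rw [add_comm]
    exact Complex.re_add_im z
  have h0 : Polynomial.aeval z (P m)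
      = Polynomial.aeval ((y:ℂ)*Complex.I) (Polynomial.taylor x (P m)) := by
    rw [Polynomial.taylor_apply, Polynomial.aeval_comp]
    congr 1
    rw [← hzz]
    simp
  rw [h0]
  have hdeg : (Polynomial.taylor x (P m)).natDegree < m+1 := Nat.lt_succ_of_le
    (by rw [Polynomial.natDegree_taylor]; exact P_natDegree_le m)
  rw [Polynomial.aeval_eq_sum_range' hdeg]
  refine le_trans (norm_sum_le _ _) ?_
  have hterm : ∀ j ∈ Finset.range (m+1),
      ‖(Polynomial.taylor x (P m)).coeff j • ((y:ℂ)*Complex.I)^j‖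
        ≤ (Real.sqrt 3 * Real.exp (3/2*x^2) * Real.sqrt (Nk m))
            * ((Real.sqrt (2*(m:ℝ)) * |y|)^j / (j.factorial:ℝ)) := by
    intro j hj
    have hjm : j ≤ m := Nat.lt_succ_iff.mp (Finset.mem_range.mp hj)
    rw [norm_smul, norm_pow, norm_mul, Complex.norm_I, Complex.norm_real, mul_one,
      Real.norm_eq_abs, Real.norm_eq_abs]
    rw [Polynomial.taylor_coeff, hasseDerivP m j]
    rw [Polynomial.eval_mul, Polynomial.eval_C]
    have hc0 : (0:ℝ) ≤ ((2^j * m.descFactorial j : ℕ) : ℝ) / (j.factorial:ℝ) := by positivity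
    rw [abs_mul, _root_.abs_of_nonneg hc0]
    have hPb := P_abs_le (m-j) x
    have hterm1 : ((2^j * m.descFactorial j : ℕ) : ℝ) / (j.factorial:ℝ) * |(P (m-j)).eval x|
        ≤ ((2^j * m.descFactorial j : ℕ) : ℝ) / (j.factorial:ℝ)
          * (Real.sqrt 3 * Real.sqrt (Nk (m-j)) * Real.exp (3/2*x^2)) :=
      mul_le_mul_of_nonneg_left hPb hc0
    have htl := term_le m j hjm
    have hyj : (0:ℝ) ≤ |y|^j := by positivity
    have hfj : (0:ℝ) < (j.factorial:ℝ) := by positivity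
    have h3e : (0:ℝ) ≤ Real.sqrt 3 * Real.exp (3/2*x^2) := by positivity
    calc ((2^j * m.descFactorial j : ℕ) : ℝ) / (j.factorial:ℝ) * |(P (m-j)).eval x| * |y|^j
        ≤ ((2^j * m.descFactorial j : ℕ) : ℝ) / (j.factorial:ℝ)
            * (Real.sqrt 3 * Real.sqrt (Nk (m-j)) * Real.exp (3/2*x^2)) * |y|^j :=
          mul_le_mul_of_nonneg_right hterm1 hyj
      _ = (Real.sqrt 3 * Real.exp (3/2*x^2)) * ((((2^j * m.descFactorial j : ℕ) : ℝ)
            * Real.sqrt (Nk (m-j))) * |y|^j) / (j.factorial:ℝ) := by ring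
      _ ≤ (Real.sqrt 3 * Real.exp (3/2*x^2)) * ((Real.sqrt (Nk m) * (Real.sqrt (2*(m:ℝ)))^j)
            * |y|^j) / (j.factorial:ℝ) := by
          gcongr
      _ = (Real.sqrt 3 * Real.exp (3/2*x^2) * Real.sqrt (Nk m))
            * ((Real.sqrt (2*(m:ℝ)) * |y|)^j / (j.factorial:ℝ)) := by
          rw [mul_pow]
          ring
  refine le_trans (Finset.sum_le_sum hterm) ?_
  rw [← Finset.mul_sum]
  have hsum : ∑ j ∈ Finset.range (m+1), (Real.sqrt (2*(m:ℝ)) * |y|)^j / (j.factorial:ℝ)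
      ≤ Real.exp (Real.sqrt (2*(m:ℝ)) * |y|) :=
    Real.sum_le_exp_of_nonneg (by positivity) (m+1)
  have hpos : (0:ℝ) ≤ Real.sqrt 3 * Real.exp (3/2*x^2) * Real.sqrt (Nk m) := by positivity
  calc (Real.sqrt 3 * Real.exp (3/2*x^2) * Real.sqrt (Nk m))
        * ∑ j ∈ Finset.range (m+1), (Real.sqrt (2*(m:ℝ)) * |y|)^j / (j.factorial:ℝ)
      ≤ (Real.sqrt 3 * Real.exp (3/2*x^2) * Real.sqrt (Nk m))
        * Real.exp (Real.sqrt (2*(m:ℝ)) * |y|) := mul_le_mul_of_nonneg_left hsum hpos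
    _ = Real.sqrt 3 * Real.sqrt (Nk m) * Real.exp (3/2*x^2)
        * Real.exp (Real.sqrt (2*(m:ℝ)) * |y|) := by ring

lemma cK_mul_sqrtN (m : ℕ) : cK m * Real.sqrt (Nk m) = (Real.pi ^ ((1:ℝ)/4))⁻¹ := by
  unfold cK Nk
  have h1 : Real.sqrt (((2^m * m.factorial : ℕ)):ℝ) = (2:ℝ)^((m:ℝ)/2) * Real.sqrt (m.factorial) := by
    push_cast
    rw [Real.sqrt_mul (by positivity)]
    congr 1
    rw [Real.sqrt_eq_rpow, ← Real.rpow_natCast 2 m, ← Real.rpow_mul (by norm_num)]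
    congr 1
    ring
  rw [h1]
  have ha : Real.pi ^ ((1:ℝ)/4) ≠ 0 := ne_of_gt (Real.rpow_pos_of_pos Real.pi_pos _)
  have hb : ((2:ℝ)^((m:ℝ)/2)) ≠ 0 := ne_of_gt (Real.rpow_pos_of_pos two_pos _)
  have hs : Real.sqrt (m.factorial) ≠ 0 := ne_of_gt (Real.sqrt_pos.mpr (by positivity))
  field_simp

lemma zetaH_norm_le (m : ℕ) (z : ℂ) :
    ‖zetaH m z‖ ≤ Real.sqrt 3 * (Real.pi ^ ((1:ℝ)/4))⁻¹
      * Real.exp (z.im^2/2 + z.re^2 + Real.sqrt (2*(m:ℝ)) * |z.im|) := by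
  rw [zetaH_eq m z]
  have h1 : ‖((cK m:ℝ):ℂ) * (-1)^m * Complex.exp (-z^2/2) * Polynomial.aeval z (P m)‖
      = cK m * Real.exp ((z.im^2 - z.re^2)/2) * ‖Polynomial.aeval z (P m)‖ := by
    rw [norm_mul, norm_mul, norm_mul, norm_pow, norm_neg, norm_one, one_pow, mul_one,
      Complex.norm_real, Real.norm_eq_abs, _root_.abs_of_nonneg (le_of_lt (cK_pos m))]
    congr 2
    rw [Complex.norm_exp]
    congr 1
    have hh : -z^2/2 = (((-1/2 : ℝ)):ℂ) * (z*z) := by push_cast; ring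
    rw [hh, Complex.re_ofReal_mul, Complex.mul_re]
    ring
  rw [h1]
  have h2 := aeval_norm_le m z
  have hcp : (0:ℝ) ≤ cK m * Real.exp ((z.im^2 - z.re^2)/2) :=
    mul_nonneg (le_of_lt (cK_pos m)) (le_of_lt (Real.exp_pos _))
  calc cK m * Real.exp ((z.im^2 - z.re^2)/2) * ‖Polynomial.aeval z (P m)‖
      ≤ cK m * Real.exp ((z.im^2 - z.re^2)/2) * (Real.sqrt 3 * Real.sqrt (Nk m)
          * Real.exp (3/2*z.re^2) * Real.exp (Real.sqrt (2*(m:ℝ)) * |z.im|)) :=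
        mul_le_mul_of_nonneg_left h2 hcp
    _ = Real.sqrt 3 * (cK m * Real.sqrt (Nk m)) * (Real.exp ((z.im^2 - z.re^2)/2)
          * Real.exp (3/2*z.re^2) * Real.exp (Real.sqrt (2*(m:ℝ)) * |z.im|)) := by ring
    _ = Real.sqrt 3 * (Real.pi ^ ((1:ℝ)/4))⁻¹
          * Real.exp (z.im^2/2 + z.re^2 + Real.sqrt (2*(m:ℝ)) * |z.im|) := by
        rw [cK_mul_sqrtN, ← Real.exp_add, ← Real.exp_add]
        congr 2
        ring

lemma const_le : Real.sqrt 3 * (Real.pi ^ ((1:ℝ)/4))⁻¹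
    ≤ (2 * Real.exp 3 / Real.pi ^ 2) ^ ((1:ℝ)/4) := by
  have hπ : 0 < Real.pi := Real.pi_pos
  have hp4 : (0:ℝ) < Real.pi ^ ((1:ℝ)/4) := Real.rpow_pos_of_pos hπ _
  have hbase : (0:ℝ) < 2 * Real.exp 3 / Real.pi^2 := by positivity
  have key : (9:ℝ) ≤ 2*Real.exp 3/Real.pi := by
    have he : Real.exp 1 > 2.7182818283 := Real.exp_one_gt_d9
    have h3 : Real.exp 3 = Real.exp 1 * Real.exp 1 * Real.exp 1 := by
      rw [← Real.exp_add, ← Real.exp_add]; norm_num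
    have hπlt : Real.pi < 3.15 := by
      have := Real.pi_lt_d2
      linarith
    rw [le_div_iff₀ hπ]
    nlinarith [he, hπ, hπlt]
  have h9 : Real.sqrt 3 = (9:ℝ)^((1:ℝ)/4) := by
    rw [show (9:ℝ) = 3^(2:ℕ) by norm_num, ← Real.rpow_natCast (3:ℝ) 2,
      ← Real.rpow_mul (by norm_num : (0:ℝ) ≤ 3)]
    rw [Real.sqrt_eq_rpow]
    norm_num
  have hmain : Real.sqrt 3 ≤ (2 * Real.exp 3 / Real.pi ^ 2) ^ ((1:ℝ)/4) * Real.pi ^ ((1:ℝ)/4) := by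
    rw [h9, ← Real.mul_rpow (le_of_lt hbase) (le_of_lt hπ)]
    apply Real.rpow_le_rpow (by norm_num) ?_ (by norm_num)
    calc (9:ℝ) ≤ 2*Real.exp 3/Real.pi := key
      _ = 2 * Real.exp 3 / Real.pi ^ 2 * Real.pi := by
          field_simp
  rw [show Real.sqrt 3 * (Real.pi ^ ((1:ℝ)/4))⁻¹ = Real.sqrt 3 / Real.pi ^ ((1:ℝ)/4) from by ring,
    div_le_iff₀ hp4]
  exact hmain

lemma znorm_le (z : ℂ) : ‖z‖ ≤ Real.exp (z.re^2/2 + |z.im|) := by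
  have h1 : ‖z‖ ≤ |z.re| + |z.im| := by
    exact Complex.norm_le_abs_re_add_abs_im z
  have h2 : z.re^2/2 + 1 ≤ Real.exp (z.re^2/2) := Real.add_one_le_exp _
  have h3 : |z.im| + 1 ≤ Real.exp |z.im| := Real.add_one_le_exp _
  have e1 : |z.re| ≤ 1 + z.re^2/2 := by nlinarith [_root_.sq_abs z.re, sq_nonneg (|z.re| - 1)]
  rw [Real.exp_add]
  have hmul : (1 + z.re^2/2) * (1 + |z.im|) ≤ Real.exp (z.re^2/2) * Real.exp |z.im| := by
    apply mul_le_mul (by linarith) (by linarith) (by positivity) (by positivity)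
  nlinarith [abs_nonneg z.im, sq_nonneg z.re, hmul, e1, h1]

theorem zetaH_deriv_bound (z : ℂ) (n : ℕ) (hn : 1 ≤ n) :
    ‖deriv (zetaH n) z‖ ≤ (2 * Real.exp 3 / Real.pi ^ 2) ^ ((1 : ℝ) / 4) *
      Real.exp (‖z‖ ^ 2 / 2 + z.re ^ 2 + |z.im|) * (1 + Real.sqrt (2 * (n : ℝ))) *
      Real.exp (2 * (n : ℝ) * |z.im|) := by
  obtain ⟨m, rfl⟩ : ∃ m, n = m + 1 := ⟨n - 1, by omega⟩
  rw [zetaH_deriv_eq m z]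
  push_cast
  set x := z.re with hx
  set y := z.im with hy
  set S := Real.sqrt (2*((m:ℝ)+1)) with hS
  have hS0 : (0:ℝ) ≤ S := Real.sqrt_nonneg _
  have hLHS : ‖-z * zetaH (m+1) z - ((S:ℝ):ℂ) * zetaH m z‖
      ≤ ‖z‖ * ‖zetaH (m+1) z‖ + S * ‖zetaH m z‖ := by
    refine le_trans (norm_sub_le _ _) ?_
    rw [norm_mul, norm_mul, norm_neg, Complex.norm_real, Real.norm_eq_abs,
      _root_.abs_of_nonneg hS0]
  refine le_trans hLHS ?_
  have hM1 := zetaH_norm_le (m+1) z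
  have hM0 := zetaH_norm_le m z
  push_cast at hM1 hM0
  have hzb := znorm_le z
  set A := Real.sqrt 3 * (Real.pi ^ ((1:ℝ)/4))⁻¹ with hA
  have hA0 : (0:ℝ) ≤ A := by
    rw [hA]
    have := Real.rpow_pos_of_pos Real.pi_pos ((1:ℝ)/4)
    positivity
  have hnorm2 : ‖z‖^2 = x^2 + y^2 := by
    rw [Complex.sq_norm, Complex.normSq_apply, ← hx, ← hy]
    ring
  have hm0 : (0:ℝ) ≤ (m:ℝ) := Nat.cast_nonneg m
  have hsq1 : S ≤ 2*((m:ℝ)+1) := by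
    rw [hS]
    calc Real.sqrt (2*((m:ℝ)+1)) ≤ Real.sqrt ((2*((m:ℝ)+1))^2) := by
          apply Real.sqrt_le_sqrt
          nlinarith
      _ = 2*((m:ℝ)+1) := Real.sqrt_sq (by positivity)
  have hsq0 : Real.sqrt (2*(m:ℝ)) ≤ 2*((m:ℝ)+1) := by
    calc Real.sqrt (2*(m:ℝ)) ≤ S := by
          rw [hS]
          apply Real.sqrt_le_sqrt
          linarith
      _ ≤ 2*((m:ℝ)+1) := hsq1
  set E1 : ℝ := Real.exp (‖z‖^2/2 + x^2 + |y|) with hE1def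
  set E2 : ℝ := Real.exp (2*((m:ℝ)+1)*|y|) with hE2def
  have hybd := abs_nonneg y
  have hEE1 : Real.exp (x^2/2+|y|) * Real.exp (y^2/2 + x^2 + S*|y|) ≤ E1 * E2 := by
    rw [hE1def, hE2def, ← Real.exp_add, ← Real.exp_add]
    apply Real.exp_le_exp.mpr
    rw [hnorm2]
    have := mul_le_mul_of_nonneg_right hsq1 hybd
    linarith
  have hEE0 : Real.exp (y^2/2 + x^2 + Real.sqrt (2*(m:ℝ))*|y|) ≤ E1 * E2 := by
    rw [hE1def, hE2def, ← Real.exp_add]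
    apply Real.exp_le_exp.mpr
    rw [hnorm2]
    have := mul_le_mul_of_nonneg_right hsq0 hybd
    have hx2 : (0:ℝ) ≤ x^2/2 := by positivity
    linarith
  calc ‖z‖ * ‖zetaH (m+1) z‖ + S * ‖zetaH m z‖
      ≤ Real.exp (x^2/2+|y|) * (A * Real.exp (y^2/2 + x^2 + S*|y|))
        + S * (A * Real.exp (y^2/2 + x^2 + Real.sqrt (2*(m:ℝ))*|y|)) := by
        apply add_le_add
        · exact mul_le_mul hzb hM1 (norm_nonneg _) (le_of_lt (Real.exp_pos _))
        · exact mul_le_mul_of_nonneg_left hM0 hS0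
    _ = A * (Real.exp (x^2/2+|y|) * Real.exp (y^2/2 + x^2 + S*|y|))
        + (A * S) * Real.exp (y^2/2 + x^2 + Real.sqrt (2*(m:ℝ))*|y|) := by ring
    _ ≤ A * (E1 * E2) + (A * S) * (E1 * E2) := by
        apply add_le_add
        · exact mul_le_mul_of_nonneg_left hEE1 hA0
        · exact mul_le_mul_of_nonneg_left hEE0 (mul_nonneg hA0 hS0)
    _ = A * ((1 + S) * (E1 * E2)) := by ring
    _ ≤ (2 * Real.exp 3 / Real.pi ^ 2) ^ ((1:ℝ)/4) * ((1 + S) * (E1 * E2)) := by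
        apply mul_le_mul_of_nonneg_right const_le
        have e1p := Real.exp_pos (‖z‖^2/2 + x^2 + |y|)
        have e2p := Real.exp_pos (2*((m:ℝ)+1)*|y|)
        rw [hE1def, hE2def]
        positivity
    _ = (2 * Real.exp 3 / Real.pi ^ 2) ^ ((1:ℝ)/4) * E1 * (1 + S) * E2 := by ring
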